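/- Let X be a real Banach space, X₀ ⊆ X a closed subspace, ε₀ > 0, k ≥ 1 an integer, and for each ε ∈ [0, ε₀) let L_ε be a bounded linear operator on X mapping X₀ into X₀, and h_ε ∈ X with L_ε h_ε = h_ε and h_ε − h₀ ∈ X₀. Assume (I − L_ε) restricted to X₀ is a bijection of X₀ whose inverse R_ε satisfies sup_{ε∈[0,ε₀)} ‖R_ε‖ < ∞. Assume there exist G₁, …, G_k ∈ X₀ such that ‖L_ε h₀ − h₀ − Σ_{i=1}^k (εⁱ/i!) G_i‖ = o(ε^k) as ε → 0⁺, and for each 1 ≤ i ≤ k there exist H_{i,0}, …, H_{i,k−i} ∈ X such that ‖R_ε G_i − Σ_{j=0}^{k−i} (ε^j/j!) H_{i,j}‖ = o(ε^{k−i}) as ε → 0⁺. Then ‖h_ε − h₀ − Σ_{n=1}^k (εⁿ/n!) Σ_{i=1}^n binom(n,i) H_{i,n−i}‖ = o(ε^k) as ε → 0⁺. -/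

import Mathlib

open Filter Topology


lemma comb_identity {X : Type*} [NormedAddCommGroup X] [NormedSpace ℝ X]
    (k : ℕ) (ε : ℝ) (H : ℕ → ℕ → X) :
    ∑ i ∈ Finset.Icc 1 k, (ε ^ i / (Nat.factorial i : ℝ)) •
        ∑ j ∈ Finset.range (k - i + 1), (ε ^ j / (Nat.factorial j : ℝ)) • H i j
  = ∑ n ∈ Finset.Icc 1 k, (ε ^ n / (Nat.factorial n : ℝ)) •
        ∑ i ∈ Finset.Icc 1 n, ((n.choose i : ℝ)) • H i (n - i) := by
  simp_rw [Finset.smul_sum]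
  rw [Finset.sum_sigma' (Finset.Icc 1 k), Finset.sum_sigma' (Finset.Icc 1 k)]
  refine Finset.sum_nbij' (fun p => ⟨p.1 + p.2, p.1⟩) (fun p => ⟨p.2, p.1 - p.2⟩)
    ?_ ?_ ?_ ?_ ?_
  · rintro ⟨i, j⟩ hp
    simp only [Finset.mem_sigma, Finset.mem_Icc, Finset.mem_range] at hp ⊢
    omega
  · rintro ⟨n, i⟩ hp
    simp only [Finset.mem_sigma, Finset.mem_Icc, Finset.mem_range] at hp ⊢
    omega
  · rintro ⟨i, j⟩ hp; simp
  · rintro ⟨n, i⟩ hp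
    simp only [Finset.mem_sigma, Finset.mem_Icc] at hp
    simp only [Sigma.mk.inj_iff]
    constructor
    · omega
    · rfl
  · rintro ⟨i, j⟩ hp
    simp only [Finset.mem_sigma, Finset.mem_Icc, Finset.mem_range] at hp
    obtain ⟨⟨h1, h2⟩, h3⟩ := hp
    simp only [Nat.add_sub_cancel_left]
    rw [smul_smul, smul_smul]
    congr 1
    have hfac : (Nat.choose (i+j) i : ℝ) * (Nat.factorial i) * (Nat.factorial j) = Nat.factorial (i+j) := by
      have := Nat.choose_mul_factorial_mul_factorial (Nat.le_add_right i j)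
      simp only [Nat.add_sub_cancel_left] at this
      exact_mod_cast congrArg (Nat.cast : ℕ → ℝ) this
    have f1 : (Nat.factorial i : ℝ) ≠ 0 := Nat.cast_ne_zero.mpr (Nat.factorial_ne_zero i)
    have f2 : (Nat.factorial j : ℝ) ≠ 0 := Nat.cast_ne_zero.mpr (Nat.factorial_ne_zero j)
    have f3 : (Nat.factorial (i+j) : ℝ) ≠ 0 := Nat.cast_ne_zero.mpr (Nat.factorial_ne_zero _)
    field_simp [pow_add]
    linear_combination (-(ε ^ i * ε ^ j)) * hfac

set_option maxHeartbeats 1000000 in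
set_option synthInstance.maxHeartbeats 400000 in
/-- **Abstract k-th order approximation theorem** (Theorem 3.1 of the paper):
given a family of bounded operators `L ε` on a Banach space `X` fixing a closed
subspace `X₀`, fixed points `h ε`, uniformly bounded inverses `R ε` of `(I - L ε)`
on `X₀`, a `k`-th order expansion of `L ε (h 0)` and `(k - i)`-th order expansions
of `R ε (G i)`, one obtains a `k`-th order expansion of `h ε` at `ε = 0⁺`. -/
theorem stmt0
    {X : Type*} [NormedAddCommGroup X] [NormedSpace ℝ X] [CompleteSpace X]
    (X₀ : Submodule ℝ X) (hX₀ : IsClosed (X₀ : Set X))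
    (ε₀ : ℝ) (hε₀ : 0 < ε₀) (k : ℕ) (hk : 1 ≤ k)
    (L : ℝ → X →L[ℝ] X) (h : ℝ → X)
    (hLmap : ∀ ε ∈ Set.Ico (0 : ℝ) ε₀, ∀ v ∈ X₀, L ε v ∈ X₀)
    (hfix : ∀ ε ∈ Set.Ico (0 : ℝ) ε₀, L ε (h ε) = h ε)
    (hdiff : ∀ ε ∈ Set.Ico (0 : ℝ) ε₀, h ε - h 0 ∈ X₀)
    (R : ℝ → X₀ →L[ℝ] X₀)
    (hR : ∀ ε ∈ Set.Ico (0 : ℝ) ε₀, ∀ v w : X₀, R ε w = v ↔ (v : X) - L ε v = (w : X))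
    (C : ℝ) (hC : ∀ ε ∈ Set.Ico (0 : ℝ) ε₀, ‖R ε‖ ≤ C)
    (G : ℕ → X₀)
    (hG : Tendsto (fun ε : ℝ =>
        ‖L ε (h 0) - h 0 -
          ∑ i ∈ Finset.Icc 1 k, (ε ^ i / (Nat.factorial i : ℝ)) • (G i : X)‖ / ε ^ k)
      (𝓝[>] 0) (𝓝 0))
    (H : ℕ → ℕ → X)
    (hH : ∀ i ∈ Finset.Icc 1 k, Tendsto (fun ε : ℝ =>
        ‖((R ε (G i) : X)) -
          ∑ j ∈ Finset.range (k - i + 1), (ε ^ j / (Nat.factorial j : ℝ)) • H i j‖ / ε ^ (k - i))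
      (𝓝[>] 0) (𝓝 0)) :
    Tendsto (fun ε : ℝ =>
        ‖h ε - h 0 - ∑ n ∈ Finset.Icc 1 k, (ε ^ n / (Nat.factorial n : ℝ)) •
            ∑ i ∈ Finset.Icc 1 n, ((n.choose i : ℝ)) • H i (n - i)‖ / ε ^ k)
      (𝓝[>] 0) (𝓝 0) := by
  have hC0 : 0 ≤ C := le_trans (norm_nonneg (R 0)) (hC 0 ⟨le_refl 0, hε₀⟩)
  have key : ∀ᶠ ε in 𝓝[>] (0:ℝ),
      ‖h ε - h 0 - ∑ n ∈ Finset.Icc 1 k, (ε ^ n / (Nat.factorial n : ℝ)) •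
          ∑ i ∈ Finset.Icc 1 n, ((n.choose i : ℝ)) • H i (n - i)‖ / ε ^ k
      ≤ C * (‖L ε (h 0) - h 0 -
            ∑ i ∈ Finset.Icc 1 k, (ε ^ i / (Nat.factorial i : ℝ)) • (G i : X)‖ / ε ^ k)
        + ∑ i ∈ Finset.Icc 1 k, (1 / (Nat.factorial i : ℝ)) *
            (‖((R ε (G i) : X)) -
              ∑ j ∈ Finset.range (k - i + 1), (ε ^ j / (Nat.factorial j : ℝ)) • H i j‖ / ε ^ (k - i)) := by
    filter_upwards [Ioo_mem_nhdsGT_of_mem (Set.left_mem_Ico.mpr hε₀)] with ε hε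
    have hεpos : 0 < ε := hε.1
    have hεne : ε ≠ 0 := ne_of_gt hεpos
    have hmem : ε ∈ Set.Ico (0:ℝ) ε₀ := ⟨hεpos.le, hε.2⟩
    set v : X₀ := ⟨h ε - h 0, hdiff ε hmem⟩ with hv_def
    set w : X₀ := ⟨(h ε - h 0) - L ε (h ε - h 0),
      sub_mem (hdiff ε hmem) (hLmap ε hmem _ (hdiff ε hmem))⟩ with hw_def
    have hwcoe : (w : X) = L ε (h 0) - h 0 := by
      show (h ε - h 0) - L ε (h ε - h 0) = L ε (h 0) - h 0
      rw [map_sub, hfix ε hmem]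
      abel
    have hRw : R ε w = v := (hR ε hmem v w).mpr rfl
    set e : X₀ := w - ∑ i ∈ Finset.Icc 1 k, (ε ^ i / (Nat.factorial i : ℝ)) • G i with he_def
    have hecoe : (e : X) = L ε (h 0) - h 0 -
        ∑ i ∈ Finset.Icc 1 k, (ε ^ i / (Nat.factorial i : ℝ)) • (G i : X) := by
      rw [he_def]
      push_cast
      rw [hwcoe]
    have hw_split : w = (∑ i ∈ Finset.Icc 1 k, (ε ^ i / (Nat.factorial i : ℝ)) • G i) + e := by
      rw [he_def]; abel
    have hv_eq : v = (∑ i ∈ Finset.Icc 1 k, (ε ^ i / (Nat.factorial i : ℝ)) • R ε (G i)) + R ε e := by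
      rw [← hRw, hw_split, map_add, map_sum]
      simp [map_smul]
    have hvcoe : h ε - h 0 =
        (∑ i ∈ Finset.Icc 1 k, (ε ^ i / (Nat.factorial i : ℝ)) • ((R ε (G i) : X₀) : X))
          + ((R ε e : X₀) : X) := by
      have : ((v : X₀) : X) = h ε - h 0 := rfl
      rw [← this, hv_eq]
      push_cast
      rfl
    have heq : h ε - h 0 - ∑ n ∈ Finset.Icc 1 k, (ε ^ n / (Nat.factorial n : ℝ)) •
          ∑ i ∈ Finset.Icc 1 n, ((n.choose i : ℝ)) • H i (n - i)
        = (∑ i ∈ Finset.Icc 1 k, (ε ^ i / (Nat.factorial i : ℝ)) •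
            (((R ε (G i) : X₀) : X) -
              ∑ j ∈ Finset.range (k - i + 1), (ε ^ j / (Nat.factorial j : ℝ)) • H i j))
          + ((R ε e : X₀) : X) := by
      rw [hvcoe, ← comb_identity k ε H]
      simp only [smul_sub, Finset.sum_sub_distrib]
      abel
    -- norm bound on the numerator
    have hbound : ‖h ε - h 0 - ∑ n ∈ Finset.Icc 1 k, (ε ^ n / (Nat.factorial n : ℝ)) •
          ∑ i ∈ Finset.Icc 1 n, ((n.choose i : ℝ)) • H i (n - i)‖
        ≤ (∑ i ∈ Finset.Icc 1 k, (ε ^ i / (Nat.factorial i : ℝ)) *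
            ‖((R ε (G i) : X₀) : X) -
              ∑ j ∈ Finset.range (k - i + 1), (ε ^ j / (Nat.factorial j : ℝ)) • H i j‖)
          + C * ‖L ε (h 0) - h 0 -
            ∑ i ∈ Finset.Icc 1 k, (ε ^ i / (Nat.factorial i : ℝ)) • (G i : X)‖ := by
      rw [heq]
      refine le_trans (norm_add_le _ _) (add_le_add ?_ ?_)
      · refine le_trans (norm_sum_le _ _) (Finset.sum_le_sum fun i _ => ?_)
        rw [norm_smul]
        gcongr
        rw [Real.norm_eq_abs, abs_div, abs_of_nonneg (pow_nonneg hεpos.le i),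
          abs_of_nonneg (by positivity : (0:ℝ) ≤ (Nat.factorial i : ℝ))]
      · have h1 : ‖((R ε e : X₀) : X)‖ = ‖R ε e‖ := rfl
        rw [h1, ← hecoe]
        have h2 : ‖(e : X)‖ = ‖e‖ := rfl
        rw [h2]
        calc ‖R ε e‖ ≤ ‖R ε‖ * ‖e‖ := (R ε).le_opNorm e
          _ ≤ C * ‖e‖ := by gcongr; exact hC ε hmem
    -- divide by ε ^ k
    have hεk : (0:ℝ) < ε ^ k := pow_pos hεpos k
    calc ‖h ε - h 0 - ∑ n ∈ Finset.Icc 1 k, (ε ^ n / (Nat.factorial n : ℝ)) •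
          ∑ i ∈ Finset.Icc 1 n, ((n.choose i : ℝ)) • H i (n - i)‖ / ε ^ k
        ≤ ((∑ i ∈ Finset.Icc 1 k, (ε ^ i / (Nat.factorial i : ℝ)) *
            ‖((R ε (G i) : X₀) : X) -
              ∑ j ∈ Finset.range (k - i + 1), (ε ^ j / (Nat.factorial j : ℝ)) • H i j‖)
          + C * ‖L ε (h 0) - h 0 -
            ∑ i ∈ Finset.Icc 1 k, (ε ^ i / (Nat.factorial i : ℝ)) • (G i : X)‖) / ε ^ k := by
          exact div_le_div_of_nonneg_right hbound hεk.le
      _ = C * (‖L ε (h 0) - h 0 -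
            ∑ i ∈ Finset.Icc 1 k, (ε ^ i / (Nat.factorial i : ℝ)) • (G i : X)‖ / ε ^ k)
        + ∑ i ∈ Finset.Icc 1 k, (1 / (Nat.factorial i : ℝ)) *
            (‖((R ε (G i) : X)) -
              ∑ j ∈ Finset.range (k - i + 1), (ε ^ j / (Nat.factorial j : ℝ)) • H i j‖ / ε ^ (k - i)) := by
          rw [add_div, Finset.sum_div, add_comm, mul_div_assoc]
          congr 1
          refine Finset.sum_congr rfl fun i hi => ?_
          have hik : i ≤ k := (Finset.mem_Icc.mp hi).2
          have hpow : ε ^ k = ε ^ i * ε ^ (k - i) := (pow_mul_pow_sub ε hik).symm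
          have hf : (Nat.factorial i : ℝ) ≠ 0 := Nat.cast_ne_zero.mpr (Nat.factorial_ne_zero i)
          rw [hpow]
          have hεi : ε ^ i ≠ 0 := pow_ne_zero i hεne
          have hεki : ε ^ (k - i) ≠ 0 := pow_ne_zero _ hεne
          field_simp
  refine squeeze_zero' ?_ key ?_
  · filter_upwards [self_mem_nhdsWithin] with ε hε
    have : (0:ℝ) < ε := hε
    positivity
  · have htot := (hG.const_mul C).add
      (tendsto_finset_sum (Finset.Icc 1 k) fun i hi => (hH i hi).const_mul (1 / (Nat.factorial i : ℝ)))
    simpa using htot
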